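/- For every N ≥ 67, the number of partitions of N with smallest part 3, all parts at most 9, and no part equal to 6 is at least the number of nonempty partitions of N with all parts in {4, 5, 6, 7, 8, 9}. -/

import Mathlib

open Multiset

/-- Reconstruction of a multiset with elements in {4,...,9} from its counts. -/
lemma recon69 (s : Multiset ℕ) (h : ∀ j ∈ s, 4 ≤ j ∧ j ≤ 9) :
    s = replicate (s.count 6) 6 + replicate (s.count 4) 4 + replicate (s.count 5) 5 +
        replicate (s.count 7) 7 + replicate (s.count 8) 8 + replicate (s.count 9) 9 := by
  ext n
  simp only [Multiset.count_add, Multiset.count_replicate]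
  by_cases h4 : n = 4
  · subst h4; simp
  by_cases h5 : n = 5
  · subst h5; simp
  by_cases h6 : n = 6
  · subst h6; simp
  by_cases h7 : n = 7
  · subst h7; simp
  by_cases h8 : n = 8
  · subst h8; simp
  by_cases h9 : n = 9
  · subst h9; simp
  have hns : n ∉ s := fun hn => by have := h n hn; omega
  rw [Multiset.count_eq_zero_of_notMem hns]
  simp [Ne.symm h4, Ne.symm h5, Ne.symm h6, Ne.symm h7, Ne.symm h8, Ne.symm h9]

lemma count_le_sum (s : Multiset ℕ) (hpos : ∀ j ∈ s, 1 ≤ j) (x : ℕ) :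
    s.count x ≤ s.sum := by
  calc s.count x ≤ Multiset.card s := Multiset.count_le_card x s
    _ = Multiset.card s • 1 := by simp
    _ ≤ s.sum := Multiset.card_nsmul_le_sum hpos

abbrev Tup := ℕ × ℕ × ℕ × ℕ × ℕ × ℕ

def T6 (N : ℕ) : Finset Tup :=
  Finset.range (N+1) ×ˢ Finset.range (N+1) ×ˢ Finset.range (N+1) ×ˢ
    Finset.range (N+1) ×ˢ Finset.range (N+1) ×ˢ Finset.range (N+1)

/-- tuples (k,a,b,c,d,e): counts of parts 6,4,5,7,8,9 -/
def S1 (N : ℕ) : Finset Tup := (T6 N).filter fun v =>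
  6*v.1 + 4*v.2.1 + 5*v.2.2.1 + 7*v.2.2.2.1 + 8*v.2.2.2.2.1 + 9*v.2.2.2.2.2 = N ∧
  v ≠ (0,0,0,0,0,0)

/-- tuples (m,a,b,c,d,e): counts of parts 3,4,5,7,8,9, with m ≥ 1 -/
def S2 (N : ℕ) : Finset Tup := (T6 N).filter fun v =>
  3*v.1 + 4*v.2.1 + 5*v.2.2.1 + 7*v.2.2.2.1 + 8*v.2.2.2.2.1 + 9*v.2.2.2.2.2 = N ∧
  1 ≤ v.1

def G : Tup → Tup := fun v =>
  if 1 ≤ v.1 then (2*v.1, v.2.1, v.2.2.1, v.2.2.2.1, v.2.2.2.2.1, v.2.2.2.2.2)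
  else if 1 ≤ v.2.2.2.2.1 then
    (1, v.2.1, v.2.2.1+1, v.2.2.2.1, v.2.2.2.2.1-1, v.2.2.2.2.2)
  else if 1 ≤ v.2.2.2.2.2 then (3, v.2.1, v.2.2.1, v.2.2.2.1, 0, v.2.2.2.2.2-1)
  else if 1 ≤ v.2.2.2.1 then
    (if 2 ≤ v.2.1 then (5, v.2.1-2, v.2.2.1, v.2.2.2.1-1, 0, 0)
     else if 3 ≤ v.2.2.2.1 then (7, v.2.1, v.2.2.1, v.2.2.2.1-3, 0, 0)
     else (9, v.2.1, v.2.2.1-4, v.2.2.2.1-1, 0, 0))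
  else if 5 ≤ v.2.2.1 then
    (if 2 ≤ v.2.1 then (11, v.2.1-2, v.2.2.1-5, 0, 0, 0)
     else (15, v.2.1, v.2.2.1-9, 0, 0, 0))
  else if 1 ≤ v.2.2.1 then (13, v.2.1-11, v.2.2.1+1, 0, 0, 0)
  else (15, v.2.1-15, 3, 0, 0, 0)

lemma mem_S1_iff {N : ℕ} {k a b c d e : ℕ} : ((k,a,b,c,d,e) : Tup) ∈ S1 N ↔
    (6*k + 4*a + 5*b + 7*c + 8*d + 9*e = N ∧
      ¬(k = 0 ∧ a = 0 ∧ b = 0 ∧ c = 0 ∧ d = 0 ∧ e = 0)) ∧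
    k ≤ N ∧ a ≤ N ∧ b ≤ N ∧ c ≤ N ∧ d ≤ N ∧ e ≤ N := by
  simp only [S1, T6, Finset.mem_filter, Finset.mem_product, Finset.mem_range,
    ne_eq, Prod.mk.injEq]
  omega

lemma mem_S2_iff {N : ℕ} {m a b c d e : ℕ} : ((m,a,b,c,d,e) : Tup) ∈ S2 N ↔
    (3*m + 4*a + 5*b + 7*c + 8*d + 9*e = N ∧ 1 ≤ m) ∧
    m ≤ N ∧ a ≤ N ∧ b ≤ N ∧ c ≤ N ∧ d ≤ N ∧ e ≤ N := by
  simp only [S2, T6, Finset.mem_filter, Finset.mem_product, Finset.mem_range]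
  omega

def H : Tup → Tup := fun v =>
  if v.1 = 1 then (0, v.2.1, v.2.2.1-1, v.2.2.2.1, v.2.2.2.2.1+1, v.2.2.2.2.2)
  else if v.1 = 3 then (0, v.2.1, v.2.2.1, v.2.2.2.1, 0, v.2.2.2.2.2+1)
  else if v.1 = 5 then (0, v.2.1+2, v.2.2.1, v.2.2.2.1+1, 0, 0)
  else if v.1 = 7 then (0, v.2.1, v.2.2.1, v.2.2.2.1+3, 0, 0)
  else if v.1 = 9 then (0, v.2.1, v.2.2.1+4, v.2.2.2.1+1, 0, 0)
  else if v.1 = 11 then (0, v.2.1+2, v.2.2.1+5, 0, 0, 0)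
  else if v.1 = 13 then (0, v.2.1+11, v.2.2.1-1, 0, 0, 0)
  else if v.1 = 15 then
    (if 2 ≤ v.2.1 then (0, v.2.1+15, 0, 0, 0, 0) else (0, v.2.1, v.2.2.1+9, 0, 0, 0))
  else (v.1/2, v.2.1, v.2.2.1, v.2.2.2.1, v.2.2.2.2.1, v.2.2.2.2.2)

set_option maxHeartbeats 1600000 in
lemma HG (N : ℕ) (hN : 67 ≤ N) (v : Tup) (hv : v ∈ S1 N) : H (G v) = v := by
  obtain ⟨k,a,b,c,d,e⟩ := v
  rw [mem_S1_iff] at hv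
  obtain ⟨⟨hsum, -⟩, -⟩ := hv
  simp only [G]
  split_ifs <;>
    (simp only [H]; split_ifs <;> (simp only [Prod.mk.injEq, true_and, and_true]; try omega))


set_option maxHeartbeats 3200000 in
lemma S1_card_le_S2_card (N : ℕ) (hN : 67 ≤ N) : (S1 N).card ≤ (S2 N).card := by
  apply Finset.card_le_card_of_injOn G
  · intro v hv
    obtain ⟨k,a,b,c,d,e⟩ := v
    rw [Finset.mem_coe, mem_S1_iff] at hv
    obtain ⟨⟨hsum, -⟩, -⟩ := hv
    simp only [G]
    split_ifs <;> (rw [Finset.mem_coe, mem_S2_iff]; omega)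
  · intro v hv w hw hvw
    rw [← HG N hN v (Finset.mem_coe.mp hv), ← HG N hN w (Finset.mem_coe.mp hw), hvw]

def buildParts (v : Tup) : Multiset ℕ :=
  replicate v.1 3 + replicate v.2.1 4 + replicate v.2.2.1 5 +
  replicate v.2.2.2.1 7 + replicate v.2.2.2.2.1 8 + replicate v.2.2.2.2.2 9

lemma mem_buildParts {v : Tup} {j : ℕ} : j ∈ buildParts v ↔
    (v.1 ≠ 0 ∧ j = 3) ∨ (v.2.1 ≠ 0 ∧ j = 4) ∨ (v.2.2.1 ≠ 0 ∧ j = 5) ∨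
    (v.2.2.2.1 ≠ 0 ∧ j = 7) ∨ (v.2.2.2.2.1 ≠ 0 ∧ j = 8) ∨
    (v.2.2.2.2.2 ≠ 0 ∧ j = 9) := by
  simp only [buildParts, Multiset.mem_add, Multiset.mem_replicate]
  tauto

lemma buildParts_inj {v w : Tup} (h : buildParts v = buildParts w) : v = w := by
  have c3 := congrArg (fun s => Multiset.count 3 s) h
  have c4 := congrArg (fun s => Multiset.count 4 s) h
  have c5 := congrArg (fun s => Multiset.count 5 s) h
  have c7 := congrArg (fun s => Multiset.count 7 s) h
  have c8 := congrArg (fun s => Multiset.count 8 s) h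
  have c9 := congrArg (fun s => Multiset.count 9 s) h
  simp only [buildParts, Multiset.count_add, Multiset.count_replicate] at c3 c4 c5 c7 c8 c9
  norm_num at c3 c4 c5 c7 c8 c9
  obtain ⟨k,a,b,c,d,e⟩ := v
  obtain ⟨k',a',b',c',d',e'⟩ := w
  simp_all only [Prod.mk.injEq] <;> omega

def buildP (N : ℕ) (v : Tup) (hv : v ∈ S2 N) : Nat.Partition N where
  parts := buildParts v
  parts_pos := by
    intro i hi
    rw [mem_buildParts] at hi
    omega
  parts_sum := by
    obtain ⟨m,a,b,c,d,e⟩ := v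
    rw [mem_S2_iff] at hv
    simp only [buildParts, Multiset.sum_add, Multiset.sum_replicate, smul_eq_mul]
    omega


lemma buildP_mem (N : ℕ) (v : Tup) (hv : v ∈ S2 N) :
    3 ∈ (buildP N v hv).parts ∧ (∀ j ∈ (buildP N v hv).parts, 3 ≤ j ∧ j ≤ 9) ∧
    6 ∉ (buildP N v hv).parts := by
  have hparts : (buildP N v hv).parts = buildParts v := rfl
  obtain ⟨hs, hm⟩ := (by
    obtain ⟨m,a,b,c,d,e⟩ := v
    exact ((mem_S2_iff).mp hv).1 : 3*v.1 + 4*v.2.1 + 5*v.2.2.1 + 7*v.2.2.2.1 +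
      8*v.2.2.2.2.1 + 9*v.2.2.2.2.2 = N ∧ 1 ≤ v.1)
  refine ⟨?_, ?_, ?_⟩
  · rw [hparts, mem_buildParts]
    exact Or.inl ⟨by omega, rfl⟩
  · intro j hj
    rw [hparts, mem_buildParts] at hj
    omega
  · intro hj
    rw [hparts, mem_buildParts] at hj
    omega

theorem stmt_12 (N : ℕ) (hN : 67 ≤ N) :
    Nat.card {p : Nat.Partition N //
        p.parts ≠ 0 ∧ ∀ j ∈ p.parts, 4 ≤ j ∧ j ≤ 9} ≤
      Nat.card {p : Nat.Partition N //
        3 ∈ p.parts ∧ (∀ j ∈ p.parts, 3 ≤ j ∧ j ≤ 9) ∧ 6 ∉ p.parts} := by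
  classical
  have step1 : Nat.card {p : Nat.Partition N //
      p.parts ≠ 0 ∧ ∀ j ∈ p.parts, 4 ≤ j ∧ j ≤ 9} ≤ (S1 N).card := by
    rw [← Nat.card_eq_finsetCard]
    refine Nat.card_le_card_of_injective
      (fun p => ⟨(p.1.parts.count 6, p.1.parts.count 4, p.1.parts.count 5,
        p.1.parts.count 7, p.1.parts.count 8, p.1.parts.count 9), ?_⟩) ?_
    · obtain ⟨p, hne, hp⟩ := p
      have hrec := recon69 p.parts hp
      have hsum : p.parts.sum = N := p.parts_sum
      have hs : 6 * p.parts.count 6 + 4 * p.parts.count 4 + 5 * p.parts.count 5 +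
          7 * p.parts.count 7 + 8 * p.parts.count 8 + 9 * p.parts.count 9 = N := by
        conv_rhs => rw [← hsum, hrec]
        simp only [Multiset.sum_add, Multiset.sum_replicate, smul_eq_mul]
        ring
      have hbd : ∀ x : ℕ, p.parts.count x ≤ N := by
        intro x
        calc p.parts.count x ≤ p.parts.sum :=
              count_le_sum p.parts (fun j hj => by have := hp j hj; omega) x
          _ = N := hsum
      rw [mem_S1_iff]
      refine ⟨⟨hs, ?_⟩, hbd 6, hbd 4, hbd 5, hbd 7, hbd 8, hbd 9⟩
      intro hzero
      apply hne
      rw [hrec, hzero.1, hzero.2.1, hzero.2.2.1, hzero.2.2.2.1, hzero.2.2.2.2.1,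
        hzero.2.2.2.2.2]
      simp
    · intro p q hpq
      simp only [Subtype.mk.injEq, Prod.mk.injEq] at hpq
      obtain ⟨h6, h4, h5, h7, h8, h9⟩ := hpq
      apply Subtype.ext
      apply Nat.Partition.ext
      rw [recon69 p.1.parts p.2.2, recon69 q.1.parts q.2.2, h4, h5, h6, h7, h8, h9]
  have step3 : (S2 N).card ≤ Nat.card {p : Nat.Partition N //
      3 ∈ p.parts ∧ (∀ j ∈ p.parts, 3 ≤ j ∧ j ≤ 9) ∧ 6 ∉ p.parts} := by
    rw [← Nat.card_eq_finsetCard]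
    refine Nat.card_le_card_of_injective
      (fun v : {x // x ∈ S2 N} => ⟨buildP N v.1 v.2, buildP_mem N v.1 v.2⟩) ?_
    intro v w hvw
    simp only [Subtype.mk.injEq] at hvw
    exact Subtype.ext (buildParts_inj (congrArg Nat.Partition.parts hvw))
  exact le_trans step1 (le_trans (S1_card_le_S2_card N hN) step3)
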